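/- Compactness of INQML over proper models: a set Φ ⊆ INQML is satisfiable at a nonempty state of some inquisitive model (with downward-closed inquisitive assignments) iff every finite subset is. In particular, satisfiability over pseudo-models coincides with satisfiability over models. -/

import Mathlib

inductive InqForm (P : Type) : Type
  | atom : P → InqForm P
  | bot : InqForm P
  | and : InqForm P → InqForm P → InqForm P
  | impl : InqForm P → InqForm P → InqForm P
  | ior : InqForm P → InqForm P → InqForm P
  | box : InqForm P → InqForm P
  | boxplus : InqForm P → InqForm P

/-- A pseudo-model: worlds `W`, inquisitive assignment `Sig` (nonempty valued),
propositional valuation `V`. -/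
structure PseudoModel (P W : Type) where
  Sig : W → Set (Set W)
  Sig_nonempty : ∀ w, (Sig w).Nonempty
  V : P → Set W

/-- The associated modal assignment σ(w) = ⋃ Σ(w). -/
def PseudoModel.sigma {P W : Type} (M : PseudoModel P W) (w : W) : Set W :=
  ⋃₀ M.Sig w

/-- Support semantics of INQML over pseudo-models. -/
def support {P W : Type} (M : PseudoModel P W) : InqForm P → Set W → Prop
  | .atom p, s => s ⊆ M.V p
  | .bot, s => s = ∅
  | .and φ ψ, s => support M φ s ∧ support M ψ s
  | .impl φ ψ, s => ∀ t ⊆ s, support M φ t → support M ψ t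
  | .ior φ ψ, s => support M φ s ∨ support M ψ s
  | .box φ, s => ∀ w ∈ s, support M φ (M.sigma w)
  | .boxplus φ, s => ∀ w ∈ s, ∀ t ∈ M.Sig w, support M φ t

/-- The flatness grade ♭(φ). -/
def flatGrade {P : Type} : InqForm P → ℕ
  | .atom _ => 0
  | .bot => 0
  | .and φ ψ => max (flatGrade φ) (flatGrade ψ)
  | .impl _ ψ => flatGrade ψ
  | .ior φ ψ => flatGrade φ + flatGrade ψ + 1
  | .box _ => 0
  | .boxplus _ => 0

/-- Downward closure of a family of information states. -/
def downClose {W : Type} (Pi : Set (Set W)) : Set (Set W) :=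
  {t | ∃ s ∈ Pi, t ⊆ s}

namespace InqCompact

variable {P W : Type}

/-- modal depth -/
def mdepth {P : Type} : InqForm P → ℕ
  | .atom _ => 0
  | .bot => 0
  | .and φ ψ => max (mdepth φ) (mdepth ψ)
  | .impl φ ψ => max (mdepth φ) (mdepth ψ)
  | .ior φ ψ => max (mdepth φ) (mdepth ψ)
  | .box φ => mdepth φ + 1
  | .boxplus φ => mdepth φ + 1

/-- syntactically flat formulas -/
inductive Flat {P : Type} : InqForm P → Prop
  | atom (p) : Flat (.atom p)
  | bot : Flat .bot
  | and {φ ψ} : Flat φ → Flat ψ → Flat (.and φ ψ)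
  | impl {φ ψ} : Flat φ → Flat ψ → Flat (.impl φ ψ)
  | box (φ) : Flat (.box φ)
  | boxplus (φ) : Flat (.boxplus φ)

def itop {P : Type} : InqForm P := .impl .bot .bot

def bigAnd {P : Type} : List (InqForm P) → InqForm P
  | [] => itop
  | γ :: l => .and γ (bigAnd l)

noncomputable instance : DecidableEq (InqForm P) := Classical.decEq _

/-- all functions (as total maps) from elements of `l₁` into `l₂` -/
noncomputable def allFuns {P : Type} : List (InqForm P) → List (InqForm P) →
    List (InqForm P → InqForm P)
  | [], _ => [fun _ => itop]
  | a :: l, l₂ => (allFuns l l₂).flatMap (fun g => l₂.map (fun b => Function.update g a b))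

/-- resolutions -/
noncomputable def Res {P : Type} : InqForm P → List (InqForm P)
  | .atom p => [.atom p]
  | .bot => [.bot]
  | .and φ ψ => (Res φ).flatMap (fun α => (Res ψ).map (fun β => .and α β))
  | .impl φ ψ => (allFuns (Res φ) (Res ψ)).map
      (fun g => bigAnd ((Res φ).map (fun α => .impl α (g α))))
  | .ior φ ψ => Res φ ++ Res ψ
  | .box φ => [.box φ]
  | .boxplus φ => [.boxplus φ]

theorem support_empty (M : PseudoModel P W) : ∀ φ : InqForm P, support M φ ∅
  | .atom _ => by simp [support]
  | .bot => by simp [support]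
  | .and φ ψ => ⟨support_empty M φ, support_empty M ψ⟩
  | .impl φ ψ => by
      intro t ht _
      rw [Set.subset_empty_iff] at ht
      subst ht
      exact support_empty M ψ
  | .ior φ ψ => Or.inl (support_empty M φ)
  | .box φ => by simp [support]
  | .boxplus φ => by simp [support]

theorem support_mono (M : PseudoModel P W) :
    ∀ (φ : InqForm P) {s t : Set W}, support M φ s → t ⊆ s → support M φ t
  | .atom p, s, t, h, hts => hts.trans h
  | .bot, s, t, h, hts => by
      subst h; rwa [Set.subset_empty_iff] at hts
  | .and φ ψ, s, t, h, hts => ⟨support_mono M φ h.1 hts, support_mono M ψ h.2 hts⟩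
  | .impl φ ψ, s, t, h, hts => fun u hu hsup => h u (hu.trans hts) hsup
  | .ior φ ψ, s, t, h, hts =>
      h.elim (fun h => Or.inl (support_mono M φ h hts))
        (fun h => Or.inr (support_mono M ψ h hts))
  | .box φ, s, t, h, hts => fun w hw => h w (hts hw)
  | .boxplus φ, s, t, h, hts => fun w hw => h w (hts hw)

theorem flat_support (M : PseudoModel P W) {α : InqForm P} (hα : Flat α) :
    ∀ {s : Set W}, (∀ w ∈ s, support M α {w}) → support M α s := by
  induction hα with
  | atom p =>
      intro s h w hw
      have := h w hw
      simp only [support, Set.singleton_subset_iff] at this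
      exact this
  | bot =>
      intro s h
      ext w; simp only [Set.mem_empty_iff_false, iff_false]
      intro hw
      exact Set.singleton_ne_empty w (h w hw)
  | and hφ hψ ihφ ihψ =>
      intro s h
      exact ⟨ihφ (fun w hw => (h w hw).1), ihψ (fun w hw => (h w hw).2)⟩
  | @impl φ ψ hφ hψ ihφ ihψ =>
      intro s h t hts hφt
      refine ihψ (fun w hw => ?_)
      have h1 : support M φ {w} := support_mono M φ hφt (Set.singleton_subset_iff.2 hw)
      exact h w (hts hw) {w} le_rfl h1
  | box φ => intro s h w hw; exact h w hw w rfl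
  | boxplus φ => intro s h w hw; exact h w hw w rfl

theorem flat_iff (M : PseudoModel P W) {α : InqForm P} (hα : Flat α) {s : Set W} :
    support M α s ↔ ∀ w ∈ s, support M α {w} :=
  ⟨fun h w hw => support_mono M α h (Set.singleton_subset_iff.2 hw), flat_support M hα⟩

theorem support_itop (M : PseudoModel P W) (s : Set W) : support M (itop : InqForm P) s := by
  intro t ht hbot
  rw [show t = ∅ from hbot]
  exact support_empty M _

theorem support_bigAnd (M : PseudoModel P W) :
    ∀ (l : List (InqForm P)) (s : Set W),
      support M (bigAnd l) s ↔ ∀ γ ∈ l, support M γ s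
  | [], s => by simpa [bigAnd] using support_itop M s
  | γ :: l, s => by
      simp only [bigAnd, List.mem_cons]
      constructor
      · rintro ⟨h1, h2⟩ δ (rfl | hδ)
        · exact h1
        · exact (support_bigAnd M l s).1 h2 δ hδ
      · intro h
        exact ⟨h γ (Or.inl rfl), (support_bigAnd M l s).2 fun δ hδ => h δ (Or.inr hδ)⟩

theorem flat_itop : Flat (itop : InqForm P) := Flat.impl Flat.bot Flat.bot

theorem flat_bigAnd {l : List (InqForm P)} (h : ∀ γ ∈ l, Flat γ) : Flat (bigAnd l) := by
  induction l with
  | nil => exact flat_itop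
  | cons γ l ih =>
      exact Flat.and (h γ (List.mem_cons_self))
        (ih fun δ hδ => h δ (List.mem_cons_of_mem _ hδ))

theorem mdepth_itop : mdepth (itop : InqForm P) = 0 := rfl

theorem mdepth_bigAnd {l : List (InqForm P)} {n : ℕ} (h : ∀ γ ∈ l, mdepth γ ≤ n) :
    mdepth (bigAnd l) ≤ n := by
  induction l with
  | nil => simp [bigAnd, mdepth_itop]
  | cons γ l ih =>
      simp only [bigAnd, mdepth, max_le_iff]
      exact ⟨h γ (List.mem_cons_self), ih fun δ hδ => h δ (List.mem_cons_of_mem _ hδ)⟩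

theorem allFuns_mem {l₁ l₂ : List (InqForm P)} {g : InqForm P → InqForm P}
    (hg : g ∈ allFuns l₁ l₂) : ∀ a ∈ l₁, g a ∈ l₂ := by
  induction l₁ generalizing g with
  | nil => simp
  | cons a l ih =>
      simp only [allFuns, List.mem_flatMap, List.mem_map] at hg
      obtain ⟨g', hg', b, hb, rfl⟩ := hg
      intro a' ha'
      rcases List.mem_cons.1 ha' with rfl | ha'
      · simpa [Function.update] using hb
      · by_cases hE : a' = a
        · subst hE; simpa [Function.update] using hb
        · rw [Function.update_of_ne hE]
          exact ih hg' a' ha'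

theorem allFuns_exists {l₁ l₂ : List (InqForm P)} (hne : ∃ b, b ∈ l₂)
    (F : InqForm P → InqForm P) (hF : ∀ a ∈ l₁, F a ∈ l₂) :
    ∃ g ∈ allFuns l₁ l₂, ∀ a ∈ l₁, g a = F a := by
  induction l₁ with
  | nil => exact ⟨fun _ => itop, by simp [allFuns], by simp⟩
  | cons a l ih =>
      obtain ⟨g, hg, hgF⟩ := ih (fun a' ha' => hF a' (List.mem_cons_of_mem _ ha'))
      refine ⟨Function.update g a (F a), ?_, ?_⟩
      · simp only [allFuns, List.mem_flatMap, List.mem_map]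
        exact ⟨g, hg, F a, hF a (List.mem_cons_self), rfl⟩
      · intro a' ha'
        by_cases hE : a' = a
        · subst hE; simp [Function.update]
        · rw [Function.update_of_ne hE]
          exact hgF a' ((List.mem_cons.1 ha').resolve_left hE)

theorem allFuns_nonempty {l₁ l₂ : List (InqForm P)} (hne : ∃ b, b ∈ l₂) :
    ∃ g, g ∈ allFuns l₁ l₂ := by
  induction l₁ with
  | nil => exact ⟨fun _ => itop, by simp [allFuns]⟩
  | cons a l ih =>
      obtain ⟨g, hg⟩ := ih
      obtain ⟨b, hb⟩ := hne
      exact ⟨Function.update g a b, by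
        simp only [allFuns, List.mem_flatMap, List.mem_map]
        exact ⟨g, hg, b, hb, rfl⟩⟩

theorem res_exists : ∀ φ : InqForm P, ∃ α, α ∈ Res φ
  | .atom p => ⟨.atom p, by simp [Res]⟩
  | .bot => ⟨.bot, by simp [Res]⟩
  | .and φ ψ => by
      obtain ⟨α, hα⟩ := res_exists φ
      obtain ⟨β, hβ⟩ := res_exists ψ
      exact ⟨.and α β, by simp only [Res, List.mem_flatMap, List.mem_map]; exact ⟨α, hα, β, hβ, rfl⟩⟩
  | .impl φ ψ => by
      obtain ⟨g, hg⟩ := allFuns_nonempty (l₁ := Res φ) (res_exists ψ)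
      exact ⟨_, List.mem_map_of_mem hg⟩
  | .ior φ ψ => by
      obtain ⟨α, hα⟩ := res_exists φ
      exact ⟨α, by simp [Res, hα]⟩
  | .box φ => ⟨.box φ, by simp [Res]⟩
  | .boxplus φ => ⟨.boxplus φ, by simp [Res]⟩

theorem res_flat : ∀ φ : InqForm P, ∀ α ∈ Res φ, Flat α
  | .atom p => by simp [Res]; exact Flat.atom p
  | .bot => by simp [Res]; exact Flat.bot
  | .and φ ψ => by
      simp only [Res, List.mem_flatMap, List.mem_map]
      rintro α ⟨α', hα', β', hβ', rfl⟩
      exact Flat.and (res_flat φ α' hα') (res_flat ψ β' hβ')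
  | .impl φ ψ => by
      simp only [Res, List.mem_map]
      rintro α ⟨g, hg, rfl⟩
      refine flat_bigAnd ?_
      simp only [List.mem_map]
      rintro γ ⟨α', hα', rfl⟩
      exact Flat.impl (res_flat φ α' hα') (res_flat ψ _ (allFuns_mem hg α' hα'))
  | .ior φ ψ => by
      simp only [Res, List.mem_append]
      rintro α (hα | hα)
      · exact res_flat φ α hα
      · exact res_flat ψ α hα
  | .box φ => by simp [Res]; exact Flat.box φ
  | .boxplus φ => by simp [Res]; exact Flat.boxplus φ

theorem mdepth_res : ∀ φ : InqForm P, ∀ α ∈ Res φ, mdepth α ≤ mdepth φ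
  | .atom p => by simp [Res]
  | .bot => by simp [Res]
  | .and φ ψ => by
      simp only [Res, List.mem_flatMap, List.mem_map]
      rintro α ⟨α', hα', β', hβ', rfl⟩
      simp only [mdepth, max_le_iff]
      exact ⟨le_sup_of_le_left (mdepth_res φ α' hα'), le_sup_of_le_right (mdepth_res ψ β' hβ')⟩
  | .impl φ ψ => by
      simp only [Res, List.mem_map]
      rintro α ⟨g, hg, rfl⟩
      refine mdepth_bigAnd ?_
      simp only [List.mem_map]
      rintro γ ⟨α', hα', rfl⟩
      simp only [mdepth, max_le_iff]
      exact ⟨le_sup_of_le_left (mdepth_res φ α' hα'),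
        le_sup_of_le_right (mdepth_res ψ _ (allFuns_mem hg α' hα'))⟩
  | .ior φ ψ => by
      simp only [Res, List.mem_append]
      rintro α (hα | hα)
      · exact le_sup_of_le_left (mdepth_res φ α hα)
      · exact le_sup_of_le_right (mdepth_res ψ α hα)
  | .box φ => by simp [Res]
  | .boxplus φ => by simp [Res]

theorem support_res (M : PseudoModel P W) :
    ∀ (φ : InqForm P) (s : Set W), support M φ s ↔ ∃ α ∈ Res φ, support M α s
  | .atom p, s => by simp [Res]
  | .bot, s => by simp [Res]
  | .and φ ψ, s => by
      constructor
      · rintro ⟨h1, h2⟩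
        obtain ⟨α, hα, hαs⟩ := (support_res M φ s).1 h1
        obtain ⟨β, hβ, hβs⟩ := (support_res M ψ s).1 h2
        refine ⟨.and α β, ?_, hαs, hβs⟩
        simp only [Res, List.mem_flatMap, List.mem_map]
        exact ⟨α, hα, β, hβ, rfl⟩
      · rintro ⟨γ, hγ, hγs⟩
        simp only [Res, List.mem_flatMap, List.mem_map] at hγ
        obtain ⟨α, hα, β, hβ, rfl⟩ := hγ
        exact ⟨(support_res M φ s).2 ⟨α, hα, hγs.1⟩, (support_res M ψ s).2 ⟨β, hβ, hγs.2⟩⟩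
  | .impl φ ψ, s => by
      constructor
      · intro h
        -- for each α ∈ Res φ there is β ∈ Res ψ dominating it
        have key : ∀ α ∈ Res φ, ∃ β ∈ Res ψ, ∀ t ⊆ s, support M α t → support M β t := by
          intro α hα
          set tα : Set W := {w ∈ s | support M α {w}} with htα
          have htαs : tα ⊆ s := fun w hw => hw.1
          have hsupα : support M α tα := flat_support M (res_flat φ α hα) (fun w hw => hw.2)
          have hsupφ : support M φ tα := (support_res M φ tα).2 ⟨α, hα, hsupα⟩
          have hsupψ : support M ψ tα := h tα htαs hsupφ
          obtain ⟨β, hβ, hβt⟩ := (support_res M ψ tα).1 hsupψ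
          refine ⟨β, hβ, fun t hts hαt => ?_⟩
          have h1 : t ⊆ tα := fun w hw =>
            ⟨hts hw, support_mono M α hαt (Set.singleton_subset_iff.2 hw)⟩
          exact support_mono M β hβt h1
        classical
        set F : InqForm P → InqForm P := fun α =>
          if hc : ∃ β ∈ Res ψ, ∀ t ⊆ s, support M α t → support M β t then hc.choose
          else itop with hF
        have hF1 : ∀ α ∈ Res φ, F α ∈ Res ψ ∧ ∀ t ⊆ s, support M α t → support M (F α) t := by
          intro α hα
          have hc := key α hα
          simp only [hF, dif_pos hc]
          exact ⟨hc.choose_spec.1, hc.choose_spec.2⟩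
        obtain ⟨g, hg, hgF⟩ := allFuns_exists (res_exists ψ) F (fun α hα => (hF1 α hα).1)
        refine ⟨bigAnd ((Res φ).map (fun α => .impl α (g α))), ?_, ?_⟩
        · simp only [Res, List.mem_map]
          exact ⟨g, hg, rfl⟩
        · rw [support_bigAnd]
          simp only [List.mem_map]
          rintro γ ⟨α, hα, rfl⟩
          intro t hts hαt
          rw [hgF α hα]
          exact (hF1 α hα).2 t hts hαt
      · rintro ⟨γ, hγ, hγs⟩
        simp only [Res, List.mem_map] at hγ
        obtain ⟨g, hg, rfl⟩ := hγ
        rw [support_bigAnd] at hγs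
        intro t hts hφt
        obtain ⟨α, hα, hαt⟩ := (support_res M φ t).1 hφt
        have h1 : support M (.impl α (g α)) s := hγs _ (List.mem_map_of_mem hα)
        have h2 : support M (g α) t := h1 t hts hαt
        exact (support_res M ψ t).2 ⟨g α, allFuns_mem hg α hα, h2⟩
  | .ior φ ψ, s => by
      simp only [Res, List.mem_append]
      constructor
      · rintro (h | h)
        · obtain ⟨α, hα, hαs⟩ := (support_res M φ s).1 h
          exact ⟨α, Or.inl hα, hαs⟩
        · obtain ⟨α, hα, hαs⟩ := (support_res M ψ s).1 h
          exact ⟨α, Or.inr hα, hαs⟩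
      · rintro ⟨α, (hα | hα), hαs⟩
        · exact Or.inl ((support_res M φ s).2 ⟨α, hα, hαs⟩)
        · exact Or.inr ((support_res M ψ s).2 ⟨α, hα, hαs⟩)
  | .box φ, s => by simp [Res]
  | .boxplus φ, s => by simp [Res]

open FirstOrder FirstOrder.Language

/-- function symbols: a single constant -/
def Fns : ℕ → Type
  | 0 => Unit
  | _ + 1 => Empty

/-- relation symbols: unary atoms, binary membership `false` and state assignment `true` -/
def Rels (P : Type) : ℕ → Type
  | 0 => Empty
  | 1 => P
  | 2 => Bool
  | _ + 3 => Empty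

def Lang (P : Type) : Language := ⟨Fns, Rels P⟩

def cSym {P : Type} : (Lang P).Constants := (Unit.unit : Fns 0)
def eSym {P : Type} : (Lang P).Relations 2 := (false : Bool)
def sgSym {P : Type} : (Lang P).Relations 2 := (true : Bool)
def aSym {P : Type} (p : P) : (Lang P).Relations 1 := p

/-- the pseudo-model extracted from a first-order structure -/
noncomputable def toPseudo (P : Type) (D : Type) [(Lang P).Structure D] : PseudoModel P D where
  Sig w := {u | ∃ t : D, Structure.RelMap (sgSym (P := P)) ![w, t] ∧
      u ⊆ {v | Structure.RelMap (eSym (P := P)) ![v, t]}} ∪ {∅}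
  Sig_nonempty w := ⟨∅, Or.inr rfl⟩
  V p := {w | Structure.RelMap (aSym p) ![w]}

theorem toPseudo_dc (P : Type) (D : Type) [(Lang P).Structure D] :
    ∀ w, ∀ u ∈ (toPseudo P D).Sig w, ∀ t ⊆ u, t ∈ (toPseudo P D).Sig w := by
  intro w u hu t ht
  simp only [toPseudo] at hu ⊢
  rcases (Set.mem_union _ _ _).1 hu with ⟨tD, h1, h2⟩ | hu
  · exact Or.inl ⟨tD, h1, ht.trans h2⟩
  · simp only [Set.mem_singleton_iff] at hu
    subst hu
    rw [Set.subset_empty_iff] at ht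
    exact Or.inr ht

theorem toPseudo_sigma (P : Type) (D : Type) [(Lang P).Structure D] (w : D) :
    (toPseudo P D).sigma w =
      {v | ∃ t : D, Structure.RelMap (sgSym (P := P)) ![w, t] ∧ Structure.RelMap (eSym (P := P)) ![v, t]} := by
  ext v
  rw [PseudoModel.sigma, Set.mem_sUnion]
  simp only [toPseudo]
  constructor
  · rintro ⟨u, hu, hv⟩
    rcases (Set.mem_union _ _ _).1 hu with ⟨tD, h1, h2⟩ | hu
    · exact ⟨tD, h1, h2 hv⟩
    · simp only [Set.mem_singleton_iff] at hu
      subst hu; exact absurd hv (Set.notMem_empty v)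
  · rintro ⟨tD, h1, h2⟩
    exact ⟨{v | Structure.RelMap (eSym (P := P)) ![v, tD]}, Or.inl ⟨tD, h1, le_rfl⟩, h2⟩

/-- finite disjunction of formulas -/
def listOr {β : Type} : List ((Lang P).Formula β) → (Lang P).Formula β
  | [] => ⊥
  | f :: l => f ⊔ listOr l

theorem realize_listOr {β : Type} {D : Type} [(Lang P).Structure D] :
    ∀ (l : List ((Lang P).Formula β)) (v : β → D),
      (listOr l).Realize v ↔ ∃ f ∈ l, f.Realize v
  | [], v => by simp [listOr, Formula.Realize]
  | f :: l, v => by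
      simp only [listOr, Formula.realize_sup, realize_listOr l v, List.mem_cons]
      constructor
      · rintro (h | ⟨g, hg, hgv⟩)
        · exact ⟨f, Or.inl rfl, h⟩
        · exact ⟨g, Or.inr hg, hgv⟩
      · rintro ⟨g, (rfl | hg), hgv⟩
        · exact Or.inl hgv
        · exact Or.inr ⟨g, hg, hgv⟩

/-- v ∈ σ(x) as a formula; `Sum.inl 0` is x, `Sum.inr 0` is v -/
noncomputable def inSigmaF (P : Type) : (Lang P).Formula (Fin 1 ⊕ Fin 1) :=
  Formula.iExs (Fin 1)
    (((sgSym (P := P)).formula₂ (Term.var (Sum.inl (Sum.inl 0))) (Term.var (Sum.inr 0))) ⊓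
      ((eSym (P := P)).formula₂ (Term.var (Sum.inl (Sum.inr 0))) (Term.var (Sum.inr 0))))

/-- the first-order translation of flat formulas, with fuel -/
noncomputable def tr : ℕ → InqForm P → (Lang P).Formula (Fin 1)
  | _, .atom p => (aSym p).formula₁ (Term.var 0)
  | _, .bot => ⊥
  | n, .and φ ψ => tr n φ ⊓ tr n ψ
  | n, .impl φ ψ => (tr n φ).imp (tr n ψ)
  | _, .ior _ _ => ⊥
  | 0, .box _ => ⊥
  | 0, .boxplus _ => ⊥
  | n+1, .box φ => listOr ((Res φ).map fun α =>
      Formula.iAlls (Fin 1)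
        ((inSigmaF P).imp ((tr n α).relabel (fun _ => Sum.inr 0))))
  | n+1, .boxplus φ => Formula.iAlls (Fin 1)
      (((sgSym (P := P)).formula₂ (Term.var (Sum.inl 0)) (Term.var (Sum.inr 0))).imp
        (listOr ((Res φ).map fun α =>
          Formula.iAlls (Fin 1)
            (((eSym (P := P)).formula₂ (Term.var (Sum.inr 0))
                (Term.var (Sum.inl (Sum.inr 0)))).imp
              ((tr n α).relabel (fun _ => Sum.inr 0))))))
  termination_by n φ => (n, sizeOf φ)

theorem support_impl_singleton (M : PseudoModel P W) (φ ψ : InqForm P) (w : W) :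
    support M (.impl φ ψ) {w} ↔ (support M φ {w} → support M ψ {w}) := by
  constructor
  · intro h hφ
    exact h {w} le_rfl hφ
  · intro h t ht hφt
    rcases Set.subset_singleton_iff_eq.1 ht with rfl | rfl
    · exact support_empty M ψ
    · exact h hφt

theorem realize_inSigmaF {D : Type} [(Lang P).Structure D] (v : Fin 1 ⊕ Fin 1 → D) :
    (inSigmaF P).Realize v ↔ ∃ t : D,
      Structure.RelMap (sgSym (P := P)) ![v (Sum.inl 0), t] ∧
        Structure.RelMap (eSym (P := P)) ![v (Sum.inr 0), t] := by
  simp only [inSigmaF, Formula.realize_iExs, Formula.realize_inf, Formula.realize_rel₂,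
    Term.realize_var, id_eq, Sum.elim_inl, Sum.elim_inr]
  constructor
  · rintro ⟨i, h1, h2⟩
    exact ⟨i 0, h1, h2⟩
  · rintro ⟨t, h1, h2⟩
    exact ⟨fun _ => t, h1, h2⟩

theorem truth_lemma (P D : Type) [(Lang P).Structure D] :
    ∀ (n : ℕ) (α : InqForm P), Flat α → mdepth α ≤ n → ∀ w : D,
      (tr n α).Realize (fun _ : Fin 1 => w) ↔ support (toPseudo P D) α {w} := by
  intro n
  induction n using Nat.strong_induction_on with
  | _ n ihn =>
    intro α hα
    induction hα with
    | atom p =>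
        intro _ w
        simp only [tr, Formula.realize_rel₁, Term.realize_var]
        show _ ↔ {w} ⊆ (toPseudo P D).V p
        simp [toPseudo]
    | bot =>
        intro _ w
        simp only [tr, Formula.realize_bot]
        show False ↔ ({w} : Set D) = ∅
        simp
    | and hφ hψ ihφ ihψ =>
        intro hd w
        simp only [mdepth, max_le_iff] at hd
        simp only [tr, Formula.realize_inf]
        show _ ↔ support _ _ {w} ∧ support _ _ {w}
        rw [ihφ hd.1 w, ihψ hd.2 w]
    | @impl φ ψ hφ hψ ihφ ihψ =>
        intro hd w
        simp only [mdepth, max_le_iff] at hd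
        simp only [tr, Formula.realize_imp]
        rw [support_impl_singleton, ihφ hd.1 w, ihψ hd.2 w]
    | box φ =>
        intro hd w
        obtain ⟨m, rfl⟩ : ∃ m, n = m + 1 := by
          cases n with
          | zero => simp [mdepth] at hd
          | succ m => exact ⟨m, rfl⟩
        have hm : mdepth φ ≤ m := by simpa [mdepth] using hd
        have hR : support (toPseudo P D) (.box φ) {w} ↔
            ∃ α ∈ Res φ, ∀ v ∈ (toPseudo P D).sigma w, support (toPseudo P D) α {v} := by
          show (∀ w' ∈ ({w} : Set D), support _ φ _) ↔ _
          simp only [Set.mem_singleton_iff, forall_eq]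
          rw [support_res]
          exact exists_congr fun α => and_congr_right fun hα => flat_iff _ (res_flat φ α hα)
        rw [hR]
        simp only [tr, realize_listOr, List.mem_map]
        constructor
        · rintro ⟨f, ⟨α, hα, rfl⟩, hf⟩
          refine ⟨α, hα, fun v hv => ?_⟩
          rw [toPseudo_sigma] at hv
          obtain ⟨t, h1, h2⟩ := hv
          rw [Formula.realize_iAlls] at hf
          have := hf (fun _ => v)
          rw [Formula.realize_imp, Formula.realize_relabel] at this
          rw [← ihn m (Nat.lt_succ_self m) α (res_flat φ α hα)
            (hm.trans' (mdepth_res φ α hα)) v]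
          refine this ?_
          rw [realize_inSigmaF]
          exact ⟨t, h1, h2⟩
        · rintro ⟨α, hα, hv⟩
          refine ⟨_, ⟨α, hα, rfl⟩, ?_⟩
          rw [Formula.realize_iAlls]
          intro i
          rw [Formula.realize_imp, Formula.realize_relabel, realize_inSigmaF]
          intro hsig
          have hmem : i 0 ∈ (toPseudo P D).sigma w := by
            rw [toPseudo_sigma]; exact hsig
          have := (ihn m (Nat.lt_succ_self m) α (res_flat φ α hα)
            (hm.trans' (mdepth_res φ α hα)) (i 0)).2 (hv (i 0) hmem)
          exact this
    | boxplus φ =>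
        intro hd w
        obtain ⟨m, rfl⟩ : ∃ m, n = m + 1 := by
          cases n with
          | zero => simp [mdepth] at hd
          | succ m => exact ⟨m, rfl⟩
        have hm : mdepth φ ≤ m := by simpa [mdepth] using hd
        have hR : support (toPseudo P D) (.boxplus φ) {w} ↔
            ∀ u ∈ (toPseudo P D).Sig w, support (toPseudo P D) φ u := by
          show (∀ w' ∈ ({w} : Set D), _) ↔ _
          simp only [Set.mem_singleton_iff, forall_eq]
        rw [hR]
        have ihα : ∀ α ∈ Res φ, ∀ v : D,
            (tr m α).Realize (fun _ : Fin 1 => v) ↔ support (toPseudo P D) α {v} :=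
          fun α hα v => ihn m (Nat.lt_succ_self m) α (res_flat φ α hα)
            (hm.trans' (mdepth_res φ α hα)) v
        simp only [tr, Formula.realize_iAlls, id_eq, Formula.realize_imp,
          Formula.realize_rel₂, Term.realize_var, Sum.elim_inl, Sum.elim_inr,
          realize_listOr, List.mem_map]
        constructor
        · intro h u hu
          rcases (Set.mem_union _ _ _).1 hu with ⟨tD, h1, h2⟩ | hu
          · have := h (fun _ => tD) h1
            obtain ⟨f, ⟨α, hα, rfl⟩, hf⟩ := this
            rw [Formula.realize_iAlls] at hf
            have hall : ∀ v ∈ {v | Structure.RelMap (eSym (P := P)) ![v, tD]},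
                support (toPseudo P D) α {v} := by
              intro v hv
              have := hf (fun _ => v)
              rw [Formula.realize_imp, Formula.realize_relabel] at this
              rw [← ihα α hα v]
              refine this ?_
              rw [Formula.realize_rel₂]
              exact hv
            have hsup : support (toPseudo P D) α u :=
              support_mono _ α (flat_support _ (res_flat φ α hα) hall) h2
            exact (support_res _ φ u).2 ⟨α, hα, hsup⟩
          · simp only [Set.mem_singleton_iff] at hu
            subst hu
            exact support_empty _ φ
        · intro h i hsg
          have hmem : {v | Structure.RelMap (eSym (P := P)) ![v, i 0]} ∈
              (toPseudo P D).Sig w := Or.inl ⟨i 0, hsg, le_rfl⟩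
          obtain ⟨α, hα, hsup⟩ := (support_res _ φ _).1 (h _ hmem)
          refine ⟨_, ⟨α, hα, rfl⟩, ?_⟩
          rw [Formula.realize_iAlls]
          intro j
          rw [Formula.realize_imp, Formula.realize_relabel, Formula.realize_rel₂]
          intro he
          exact (ihα α hα (j 0)).2
            (support_mono _ α hsup (Set.singleton_subset_iff.2 he))

/-- the designated state, as an element -/
noncomputable def cElem (P : Type) (D : Type) [(Lang P).Structure D] : D :=
  constantMap (M := D) (cSym (P := P))

/-- the designated state, as a set of worlds -/
noncomputable def cSet (P : Type) (D : Type) [(Lang P).Structure D] : Set D :=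
  {v | Structure.RelMap (eSym (P := P)) ![v, cElem P D]}

/-- the sentence expressing support of φ at the designated state -/
noncomputable def Sent {P : Type} (φ : InqForm P) : (Lang P).Sentence :=
  listOr ((Res φ).map fun α =>
    Formula.iAlls (Fin 1)
      (((eSym (P := P)).formula₂ (Term.var (Sum.inr 0))
          (Constants.term (cSym (P := P)))).imp
        ((tr (mdepth φ) α).relabel (fun _ => Sum.inr 0))))

/-- the sentence expressing nonemptiness of the designated state -/
noncomputable def NESent (P : Type) : (Lang P).Sentence :=
  Formula.iExs (Fin 1)
    ((eSym (P := P)).formula₂ (Term.var (Sum.inr 0)) (Constants.term (cSym (P := P))))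

theorem realize_NESent (P D : Type) [(Lang P).Structure D] (v : Empty → D) :
    Formula.Realize (NESent P) v ↔ (cSet P D).Nonempty := by
  simp only [NESent, Formula.realize_iExs, id_eq, Formula.realize_rel₂, Term.realize_var,
    Sum.elim_inr, Term.realize_constants]
  constructor
  · rintro ⟨i, h⟩
    exact ⟨i 0, h⟩
  · rintro ⟨x, hx⟩
    exact ⟨fun _ => x, hx⟩

theorem realize_Sent (P D : Type) [(Lang P).Structure D] (φ : InqForm P) (v : Empty → D) :
    Formula.Realize (Sent φ) v ↔ support (toPseudo P D) φ (cSet P D) := by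
  rw [support_res]
  simp only [Sent, realize_listOr, List.mem_map]
  constructor
  · rintro ⟨f, ⟨α, hα, rfl⟩, hf⟩
    refine ⟨α, hα, flat_support _ (res_flat φ α hα) fun x hx => ?_⟩
    rw [Formula.realize_iAlls] at hf
    have := hf (fun _ => x)
    rw [Formula.realize_imp, Formula.realize_relabel, Formula.realize_rel₂] at this
    simp only [Term.realize_var, Sum.elim_inr, Term.realize_constants] at this
    rw [← truth_lemma P D (mdepth φ) α (res_flat φ α hα) (mdepth_res φ α hα) x]
    exact this hx
  · rintro ⟨α, hα, hsup⟩
    refine ⟨_, ⟨α, hα, rfl⟩, ?_⟩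
    rw [Formula.realize_iAlls]
    intro i
    rw [Formula.realize_imp, Formula.realize_relabel, Formula.realize_rel₂]
    simp only [Term.realize_var, Sum.elim_inr, Term.realize_constants]
    intro he
    exact (truth_lemma P D (mdepth φ) α (res_flat φ α hα) (mdepth_res φ α hα) (i 0)).2
      (support_mono _ α hsup (Set.singleton_subset_iff.2 he))

section FromModel

variable {P W : Type}

/-- interpretation of the binary relations over `W ⊕ Set W` -/
def relInterp (M : PseudoModel P W) : Bool → W ⊕ Set W → W ⊕ Set W → Prop
  | false, Sum.inl w, Sum.inr t => w ∈ t
  | true, Sum.inl w, Sum.inr t => t ∈ M.Sig w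
  | _, _, _ => False

/-- interpretation of the unary relations over `W ⊕ Set W` -/
def atomInterp (M : PseudoModel P W) (p : P) : W ⊕ Set W → Prop
  | Sum.inl w => w ∈ M.V p
  | Sum.inr _ => False

/-- the first-order structure induced by a pseudo-model with designated state `s` -/
noncomputable def strucOf (M : PseudoModel P W) (s : Set W) :
    (Lang P).Structure (W ⊕ Set W) where
  funMap {n} f _ := match n, f with
    | 0, _ => Sum.inr s
    | _ + 1, f => f.elim
  RelMap {n} r v := match n, r with
    | 0, r => r.elim
    | 1, p => atomInterp M p (v 0)
    | 2, b => relInterp M b (v 0) (v 1)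
    | _ + 3, r => r.elim

theorem strucOf_e (M : PseudoModel P W) (s : Set W) (d₁ d₂ : W ⊕ Set W) :
    Structure.RelMap (self := strucOf M s) (eSym (P := P)) ![d₁, d₂] ↔
      relInterp M false d₁ d₂ := Iff.rfl

theorem strucOf_sg (M : PseudoModel P W) (s : Set W) (d₁ d₂ : W ⊕ Set W) :
    Structure.RelMap (self := strucOf M s) (sgSym (P := P)) ![d₁, d₂] ↔
      relInterp M true d₁ d₂ := Iff.rfl

theorem strucOf_a (M : PseudoModel P W) (s : Set W) (p : P) (d : W ⊕ Set W) :
    Structure.RelMap (self := strucOf M s) (aSym p) ![d] ↔ atomInterp M p d := Iff.rfl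

theorem strucOf_c (M : PseudoModel P W) (s : Set W) :
    @cElem P (W ⊕ Set W) (strucOf M s) = Sum.inr s := rfl

theorem relInterp_e_inr (M : PseudoModel P W) (t : Set W) :
    {d : W ⊕ Set W | relInterp M false d (Sum.inr t)} = Sum.inl '' t := by
  ext d
  cases d with
  | inl w => simp [relInterp]
  | inr u => simp [relInterp]

theorem strucOf_cSet (M : PseudoModel P W) (s : Set W) :
    @cSet P (W ⊕ Set W) (strucOf M s) = Sum.inl '' s := by
  rw [cSet]
  rw [show @cElem P (W ⊕ Set W) (strucOf M s) = Sum.inr s from rfl]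
  exact relInterp_e_inr M s

/-- the `Sig` of the pseudo-model induced by `strucOf M s`, at `inl`-worlds -/
theorem toPseudo_strucOf_Sig (M : PseudoModel P W) (s : Set W) (w : W) :
    (@toPseudo P (W ⊕ Set W) (strucOf M s)).Sig (Sum.inl w) =
      {u | ∃ t ∈ M.Sig w, u ⊆ Sum.inl '' t} ∪ {∅} := by
  show _ ∪ _ = _
  congr 1
  ext u
  constructor
  · rintro ⟨tD, h1, h2⟩
    rw [strucOf_sg] at h1
    match tD, h1 with
    | Sum.inr t, h1 =>
        refine ⟨t, h1, h2.trans ?_⟩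
        rw [show {v : W ⊕ Set W | Structure.RelMap (self := strucOf M s)
          (eSym (P := P)) ![v, Sum.inr t]} = Sum.inl '' t from relInterp_e_inr M t]
  · rintro ⟨t, h1, h2⟩
    refine ⟨Sum.inr t, h1, ?_⟩
    rw [show {v : W ⊕ Set W | Structure.RelMap (self := strucOf M s)
      (eSym (P := P)) ![v, Sum.inr t]} = Sum.inl '' t from relInterp_e_inr M t]
    exact h2

theorem toPseudo_strucOf_sigma (M : PseudoModel P W) (s : Set W) (w : W) :
    (@toPseudo P (W ⊕ Set W) (strucOf M s)).sigma (Sum.inl w) =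
      Sum.inl '' M.sigma w := by
  rw [toPseudo_sigma]
  ext d
  constructor
  · rintro ⟨tD, h1, h2⟩
    rw [strucOf_sg] at h1
    rw [strucOf_e] at h2
    match tD, d, h1, h2 with
    | Sum.inr t, Sum.inl v, h1, h2 => exact ⟨v, ⟨t, h1, h2⟩, rfl⟩
  · rintro ⟨v, ⟨t, h1, h2⟩, rfl⟩
    exact ⟨Sum.inr t, (strucOf_sg M s _ _).2 h1, (strucOf_e M s _ _).2 h2⟩

/-- transfer of support between a pseudo-model and the pseudo-model induced by its
first-order encoding -/
theorem support_transfer (M : PseudoModel P W) (s : Set W) :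
    ∀ (φ : InqForm P) (u : Set W),
      support M φ u ↔
        support (@toPseudo P (W ⊕ Set W) (strucOf M s)) φ (Sum.inl '' u)
  | .atom p, u => by
      show u ⊆ M.V p ↔ Sum.inl '' u ⊆ _
      constructor
      · rintro h d ⟨w, hw, rfl⟩
        exact (strucOf_a M s p (Sum.inl w)).2 (h hw)
      · intro h w hw
        have := h ⟨w, hw, rfl⟩
        rw [show (@toPseudo P (W ⊕ Set W) (strucOf M s)).V p =
          {d | atomInterp M p d} from rfl] at this
        exact this
  | .bot, u => by
      show u = ∅ ↔ Sum.inl '' u = ∅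
      simp
  | .and φ ψ, u => by
      show _ ∧ _ ↔ _ ∧ _
      rw [support_transfer M s φ u, support_transfer M s ψ u]
  | .ior φ ψ, u => by
      show _ ∨ _ ↔ _ ∨ _
      rw [support_transfer M s φ u, support_transfer M s ψ u]
  | .impl φ ψ, u => by
      constructor
      · intro h t' ht' hφ
        obtain ⟨t, ht, rfl⟩ := Set.subset_image_iff.1 ht'
        rw [← support_transfer M s φ t] at hφ
        rw [← support_transfer M s ψ t]
        exact h t ht hφ
      · intro h t ht hφ
        rw [support_transfer M s ψ t]
        refine h (Sum.inl '' t) (Set.image_mono ht) ?_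
        rw [← support_transfer M s φ t]
        exact hφ
  | .box φ, u => by
      constructor
      · rintro h d ⟨w, hw, rfl⟩
        rw [toPseudo_strucOf_sigma, ← support_transfer M s φ (M.sigma w)]
        exact h w hw
      · intro h w hw
        have := h (Sum.inl w) ⟨w, hw, rfl⟩
        rw [toPseudo_strucOf_sigma, ← support_transfer M s φ (M.sigma w)] at this
        exact this
  | .boxplus φ, u => by
      constructor
      · rintro h d ⟨w, hw, rfl⟩ u' hu'
        rw [toPseudo_strucOf_Sig] at hu'
        rcases (Set.mem_union _ _ _).1 hu' with ⟨t, h1, h2⟩ | hu'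
        · obtain ⟨t'', ht'', rfl⟩ := Set.subset_image_iff.1 h2
          rw [← support_transfer M s φ t'']
          exact support_mono M φ (h w hw t h1) ht''
        · simp only [Set.mem_singleton_iff] at hu'
          subst hu'
          exact support_empty _ φ
      · intro h w hw t ht
        have := h (Sum.inl w) ⟨w, hw, rfl⟩ (Sum.inl '' t) ?_
        · rw [← support_transfer M s φ t] at this
          exact this
        · rw [toPseudo_strucOf_Sig]
          exact Or.inl ⟨t, ht, le_rfl⟩

end FromModel

open FirstOrder.Language in
theorem main_compact {P : Type} (Φ : Set (InqForm P))
    (H : ∀ Φ₀ ⊆ Φ, Φ₀.Finite → ∃ (W : Type) (M : PseudoModel P W) (s : Set W),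
      s.Nonempty ∧ ∀ φ ∈ Φ₀, support M φ s) :
    ∃ (W : Type) (M : PseudoModel P W) (s : Set W),
      (∀ w, ∀ u ∈ M.Sig w, ∀ t ⊆ u, t ∈ M.Sig w) ∧ s.Nonempty ∧ ∀ φ ∈ Φ, support M φ s := by
  classical
  set T : (Lang P).Theory := insert (NESent P) (Sent '' Φ) with hT
  have hfs : T.IsFinitelySatisfiable := by
    intro T0 hT0
    set g : (Lang P).Sentence → InqForm P := fun σ =>
      if h : ∃ φ ∈ Φ, Sent φ = σ then h.choose else itop with hg
    have hg1 : ∀ σ ∈ (Sent '' Φ), g σ ∈ Φ ∧ Sent (g σ) = σ := by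
      rintro σ ⟨φ, hφ, rfl⟩
      have h : ∃ φ' ∈ Φ, Sent φ' = Sent φ := ⟨φ, hφ, rfl⟩
      simp only [hg, dif_pos h]
      exact ⟨h.choose_spec.1, h.choose_spec.2⟩
    set A : Set ((Lang P).Sentence) := (T0 : Set ((Lang P).Sentence)) ∩ (Sent '' Φ) with hA
    set Φ₀ : Set (InqForm P) := g '' A with hΦ₀
    have hΦ₀sub : Φ₀ ⊆ Φ := by
      rintro φ ⟨σ, hσ, rfl⟩
      exact (hg1 σ hσ.2).1
    have hΦ₀fin : Φ₀.Finite := (T0.finite_toSet.inter_of_left _).image g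
    obtain ⟨W, M, s, hne, hsup⟩ := H Φ₀ hΦ₀sub hΦ₀fin
    letI : (Lang P).Structure (W ⊕ Set W) := strucOf M s
    haveI : Nonempty (W ⊕ Set W) := ⟨Sum.inr s⟩
    haveI hmod : (W ⊕ Set W) ⊨ (T0 : (Lang P).Theory) := by
      refine (Theory.model_iff _).2 fun σ hσ => ?_
      rcases hT0 hσ with rfl | hσ'
      · show Formula.Realize (NESent P) _
        rw [realize_NESent]
        rw [strucOf_cSet]
        exact hne.image Sum.inl
      · have hσA : σ ∈ A := ⟨hσ, hσ'⟩
        have hgσ := hg1 σ hσ'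
        have hsupφ : support M (g σ) s := hsup (g σ) ⟨σ, hσA, rfl⟩
        rw [← hgσ.2]
        show Formula.Realize (Sent (g σ)) _
        rw [realize_Sent, strucOf_cSet]
        exact (support_transfer M s (g σ) s).1 hsupφ
    exact Theory.Model.isSatisfiable (W ⊕ Set W)
  obtain ⟨N⟩ := Theory.isSatisfiable_iff_isFinitelySatisfiable.2 hfs
  refine ⟨N, toPseudo P N, cSet P N, toPseudo_dc P N, ?_, ?_⟩
  · have := Theory.realize_sentence_of_mem (M := N) T (Set.mem_insert _ _)
    rwa [Sentence.Realize, realize_NESent] at this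
  · intro φ hφ
    have := Theory.realize_sentence_of_mem (M := N) T
      (Set.mem_insert_of_mem _ (Set.mem_image_of_mem Sent hφ))
    rwa [Sentence.Realize, realize_Sent] at this

end InqCompact

theorem inqml_compactness_models {P : Type} (Φ : Set (InqForm P)) :
    ((∃ (W : Type) (M : PseudoModel P W) (s : Set W),
        (∀ w, ∀ u ∈ M.Sig w, ∀ t ⊆ u, t ∈ M.Sig w) ∧
          s.Nonempty ∧ ∀ φ ∈ Φ, support M φ s) ↔
      ∀ Φ₀ ⊆ Φ, Φ₀.Finite →
        ∃ (W : Type) (M : PseudoModel P W) (s : Set W),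
          (∀ w, ∀ u ∈ M.Sig w, ∀ t ⊆ u, t ∈ M.Sig w) ∧
            s.Nonempty ∧ ∀ φ ∈ Φ₀, support M φ s) ∧
    ((∃ (W : Type) (M : PseudoModel P W) (s : Set W),
        (∀ w, ∀ u ∈ M.Sig w, ∀ t ⊆ u, t ∈ M.Sig w) ∧
          s.Nonempty ∧ ∀ φ ∈ Φ, support M φ s) ↔
      ∃ (W : Type) (M : PseudoModel P W) (s : Set W),
        s.Nonempty ∧ ∀ φ ∈ Φ, support M φ s) := by
  constructor
  · constructor
    · rintro ⟨W, M, s, hdc, hne, hsup⟩ Φ₀ hsub _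
      exact ⟨W, M, s, hdc, hne, fun φ hφ => hsup φ (hsub hφ)⟩
    · intro H
      refine InqCompact.main_compact Φ (fun Φ₀ hsub hfin => ?_)
      obtain ⟨W, M, s, _, hne, hsup⟩ := H Φ₀ hsub hfin
      exact ⟨W, M, s, hne, hsup⟩
  · constructor
    · rintro ⟨W, M, s, _, hne, hsup⟩
      exact ⟨W, M, s, hne, hsup⟩
    · rintro ⟨W, M, s, hne, hsup⟩
      exact InqCompact.main_compact Φ (fun Φ₀ hsub _ =>
        ⟨W, M, s, hne, fun φ hφ => hsup φ (hsub hφ)⟩)
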